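/- For every natural number n ≥ 1, the central binomial coefficient satisfies the upper bound C(2n, n) ≤ 4^n / √(πn) as real numbers. -/

import Mathlib

open Real Stirling Nat

lemma sqrt_pi_le_stirlingSeq (n : ℕ) (hn : 1 ≤ n) : Real.sqrt Real.pi ≤ stirlingSeq n := by
  obtain ⟨m, rfl⟩ := Nat.exists_eq_add_of_le hn
  have h := Stirling.stirlingSeq'_antitone.le_of_tendsto
    (tendsto_stirlingSeq_sqrt_pi.comp (Filter.tendsto_add_atTop_nat 1)) m
  simpa [Function.comp, Nat.succ_eq_add_one, Nat.add_comm] using h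

lemma factorial_eq_stirling (n : ℕ) (hn : 1 ≤ n) :
    (n ! : ℝ) = stirlingSeq n * (Real.sqrt (2 * n) * (n / Real.exp 1) ^ n) := by
  have hpos : (0:ℝ) < Real.sqrt (2 * n) * (n / Real.exp 1) ^ n := by
    have : (0:ℝ) < n := by exact_mod_cast hn
    positivity
  rw [stirlingSeq, div_mul_cancel₀ _ hpos.ne']

/-- For every `n ≥ 1`, `C(2n, n) ≤ 4^n / √(π n)` as real numbers. -/
theorem central_binom_upper_bound (n : ℕ) (hn : 1 ≤ n) :
    (Nat.choose (2 * n) n : ℝ) ≤ 4 ^ n / Real.sqrt (Real.pi * n) := by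
  have hn0 : (0:ℝ) < n := by exact_mod_cast hn
  set s := stirlingSeq n with hs
  set t := stirlingSeq (2 * n) with ht
  have hsp : Real.sqrt Real.pi ≤ s := sqrt_pi_le_stirlingSeq n hn
  have hts : t ≤ s := by
    obtain ⟨m, rfl⟩ := Nat.exists_eq_add_of_le hn
    have : 1 + m ≤ 2 * (1 + m) := by omega
    obtain ⟨k, hk⟩ := Nat.exists_eq_add_of_le this
    have h := Stirling.stirlingSeq'_antitone (show m ≤ m + k by omega)
    simp only [Function.comp, Nat.succ_eq_add_one] at h
    rw [ht, hk]
    convert h using 2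
    · rfl
    · omega
    · omega
  have hpipos : (0:ℝ) < Real.pi := Real.pi_pos
  have hspos : (0:ℝ) < s := lt_of_lt_of_le (Real.sqrt_pos.mpr hpipos) hsp
  have hchoose : (Nat.choose (2 * n) n : ℝ) * ((n ! : ℝ))^2 = ((2 * n)! : ℝ) := by
    have := Nat.choose_mul_factorial_mul_factorial (show n ≤ 2 * n by omega)
    rw [show 2 * n - n = n by omega] at this
    push_cast [← this]
    ring
  have hX : (0:ℝ) < (n / Real.exp 1) ^ n := by positivity
  set X : ℝ := (n / Real.exp 1) ^ n with hXdef
  have hfac2 : ((n ! : ℝ))^2 = s^2 * (2 * n * X^2) := by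
    rw [factorial_eq_stirling n hn, mul_pow, mul_pow, Real.sq_sqrt (by positivity)]
  have hfac2n : ((2 * n)! : ℝ) = t * (2 * Real.sqrt n * (4 ^ n * X^2)) := by
    rw [factorial_eq_stirling (2 * n) (by omega)]
    congr 1
    have h1 : Real.sqrt (2 * (2 * n : ℕ)) = 2 * Real.sqrt n := by
      push_cast
      rw [show (2:ℝ) * (2 * n) = 4 * n by ring, show (4:ℝ) = 2^2 by norm_num,
        Real.sqrt_mul (by positivity), Real.sqrt_sq (by norm_num)]
    have h2 : ((2 * n : ℕ) : ℝ) / Real.exp 1 = 2 * (n / Real.exp 1) := by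
      push_cast; ring
    have h4 : (2:ℝ) ^ (2 * n) = 4 ^ n := by rw [pow_mul]; norm_num
    have hX2 : X ^ 2 = ((n:ℝ) / Real.exp 1) ^ (2 * n) := by
      rw [hXdef, ← pow_mul, mul_comm]
    rw [h1, h2, mul_pow, h4, hX2]
  have hC : (Nat.choose (2 * n) n : ℝ) = t * (2 * Real.sqrt n * (4 ^ n * X^2)) / (s^2 * (2 * n * X^2)) := by
    rw [← hfac2n, ← hfac2, ← hchoose, mul_div_assoc]
    rw [div_self (by positivity), mul_one]
  clear_value X
  rw [hC, Real.sqrt_mul hpipos.le, div_le_div_iff₀ (by positivity)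
    (by positivity : (0:ℝ) < Real.sqrt Real.pi * Real.sqrt n)]
  have hsqn : Real.sqrt n * Real.sqrt n = n := Real.mul_self_sqrt hn0.le
  have htpos : (0:ℝ) < t := by
    have h21 : 2 * n = (2 * n - 1) + 1 := by omega
    rw [ht, h21]
    exact Stirling.stirlingSeq'_pos _
  have key : t * Real.sqrt Real.pi ≤ s ^ 2 := by
    nlinarith [Real.sqrt_nonneg Real.pi]
  have e1 : t * (2 * Real.sqrt n * (4 ^ n * X ^ 2)) * (Real.sqrt Real.pi * Real.sqrt n)
      = (t * Real.sqrt Real.pi) * (2 * (4 ^ n * X ^ 2)) * (Real.sqrt n * Real.sqrt n) := by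
    ring
  have e2 : (4:ℝ) ^ n * (s ^ 2 * (2 * n * X ^ 2)) = s ^ 2 * (2 * (4 ^ n * X ^ 2)) * n := by
    ring
  rw [e1, hsqn, e2]
  exact mul_le_mul_of_nonneg_right (mul_le_mul_of_nonneg_right key (by positivity)) hn0.le
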